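/- Let H be a complex Hilbert space, let A and X be bounded linear operators on H with A self-adjoint and positive (⟨φ, Aφ⟩ ≥ 0 for all φ) and X skew-adjoint (X* = −X), and let C ≥ 0. Assume that ⟨φ, (AX − XA)φ⟩ ≤ C·⟨φ, Aφ⟩ for all φ ∈ H (note AX − XA is self-adjoint). Then for every t ≥ 0 and every ψ ∈ H, ⟨exp(tX)ψ, A·exp(tX)ψ⟩ ≤ e^{Ct}·⟨ψ, Aψ⟩, where exp denotes the exponential of a bounded operator. -/

import Mathlib

open scoped InnerProductSpace

/-- Gronwall-type bound: if `A ≥ 0` is a bounded self-adjoint operator, `X` is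
bounded skew-adjoint, and the commutator `AX - XA` is bounded by `C·A` in the
sense of quadratic forms, then `⟨e^{tX}ψ, A e^{tX}ψ⟩ ≤ e^{Ct}⟨ψ, Aψ⟩` for `t ≥ 0`. -/
theorem statement13 {H : Type*} [NormedAddCommGroup H] [InnerProductSpace ℂ H]
    [CompleteSpace H] (A X : H →L[ℂ] H) (hA : IsSelfAdjoint A)
    (hApos : ∀ φ : H, 0 ≤ (⟪φ, A φ⟫_ℂ).re)
    (hX : ContinuousLinearMap.adjoint X = -X) (C : ℝ) (hC : 0 ≤ C)
    (hcomm : ∀ φ : H, (⟪φ, (A * X - X * A) φ⟫_ℂ).re ≤ C * (⟪φ, A φ⟫_ℂ).re) :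
    ∀ t : ℝ, 0 ≤ t → ∀ ψ : H,
      (⟪NormedSpace.exp (t • X) ψ, A (NormedSpace.exp (t • X) ψ)⟫_ℂ).re ≤
        Real.exp (C * t) * (⟪ψ, A ψ⟫_ℂ).re := by
  intro t ht ψ
  set u : ℝ → H := fun s => NormedSpace.exp (s • X) ψ with hu
  -- derivative of the operator exponential
  have hexp : ∀ s : ℝ, HasDerivAt (fun r : ℝ => NormedSpace.exp (r • X))
      (NormedSpace.exp (s • X) * X) s := by
    intro s
    have := hasDerivAt_exp_smul_const (𝕂 := ℝ) (𝔸 := H →L[ℂ] H) X s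
    exact this
  -- derivative of u
  have hud : ∀ s : ℝ, HasDerivAt u (X (u s)) s := by
    intro s
    have h1 : HasDerivAt (fun r : ℝ => (NormedSpace.exp (r • X)) ψ)
        ((NormedSpace.exp (s • X) * X) ψ) s := by
      have := ((ContinuousLinearMap.apply ℂ H ψ).restrictScalars
        ℝ).hasFDerivAt.comp_hasDerivAt s (hexp s)
      simpa [Function.comp_def] using this
    have hcom : NormedSpace.exp (s • X) * X = X * NormedSpace.exp (s • X) :=
      (((Commute.refl X).smul_left s).exp_left).eq
    rw [hcom] at h1
    simpa [u, ContinuousLinearMap.mul_apply] using h1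
  -- real-valued quadratic form
  set f : ℝ → ℝ := fun s => (⟪u s, A (u s)⟫_ℂ).re with hf
  have hfd : ∀ s : ℝ, HasDerivAt f ((⟪u s, (A * X - X * A) (u s)⟫_ℂ).re) s := by
    intro s
    have hA' : HasDerivAt (fun r => A (u r)) (A (X (u s))) s :=
      (A.restrictScalars ℝ).hasFDerivAt.comp_hasDerivAt s (hud s)
    have h2 := (hud s).inner ℂ hA'
    have h4 := Complex.reCLM.hasFDerivAt.comp_hasDerivAt s h2
    have key : ((⟪u s, A (X (u s))⟫_ℂ + ⟪X (u s), A (u s)⟫_ℂ).re)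
        = (⟪u s, (A * X - X * A) (u s)⟫_ℂ).re := by
      have h3 : ⟪X (u s), A (u s)⟫_ℂ = ⟪u s, -(X (A (u s)))⟫_ℂ := by
        rw [← ContinuousLinearMap.adjoint_inner_right X, hX,
          ContinuousLinearMap.neg_apply]
      rw [h3]
      simp only [ContinuousLinearMap.sub_apply, ContinuousLinearMap.mul_apply,
        inner_sub_right, inner_neg_right, Complex.add_re, Complex.sub_re, Complex.neg_re]
      ring
    simpa only [Function.comp_def, Complex.reCLM_apply, key] using h4
  -- Gronwall via g s = exp(-C s) * f s
  set g : ℝ → ℝ := fun s => Real.exp (-C * s) * f s with hg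
  have hgd : ∀ s : ℝ, HasDerivAt g
      (Real.exp (-C * s) * -C * f s
        + Real.exp (-C * s) * ((⟪u s, (A * X - X * A) (u s)⟫_ℂ).re)) s := by
    intro s
    have h1 : HasDerivAt (fun r : ℝ => -C * r) (-C) s := by
      simpa using (hasDerivAt_id s).const_mul (-C)
    exact h1.exp.mul (hfd s)
  have hgmono : ∀ s : ℝ, deriv g s ≤ 0 := by
    intro s
    rw [(hgd s).deriv]
    have hb := hcomm (u s)
    have hfs : f s = (⟪u s, A (u s)⟫_ℂ).re := rfl
    nlinarith [Real.exp_pos (-C * s), hApos (u s)]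
  have hanti : Antitone g := antitone_of_deriv_nonpos
    (fun s => (hgd s).differentiableAt) hgmono
  have h0 : g t ≤ g 0 := hanti ht
  have hg0 : g 0 = (⟪ψ, A ψ⟫_ℂ).re := by
    simp [g, f, u]
  have hgt : g t = Real.exp (-C * t) * f t := rfl
  have hft : f t = (⟪NormedSpace.exp (t • X) ψ, A (NormedSpace.exp (t • X) ψ)⟫_ℂ).re := rfl
  rw [hgt, hg0, hft] at h0
  have hmul : Real.exp (C * t) * Real.exp (-C * t) = 1 := by
    rw [← Real.exp_add]; ring_nf; exact Real.exp_zero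
  calc (⟪NormedSpace.exp (t • X) ψ, A (NormedSpace.exp (t • X) ψ)⟫_ℂ).re
      = (Real.exp (C * t) * Real.exp (-C * t)) *
        (⟪NormedSpace.exp (t • X) ψ, A (NormedSpace.exp (t • X) ψ)⟫_ℂ).re := by
        rw [hmul, one_mul]
    _ = Real.exp (C * t) * (Real.exp (-C * t) *
        (⟪NormedSpace.exp (t • X) ψ, A (NormedSpace.exp (t • X) ψ)⟫_ℂ).re) := by ring
    _ ≤ Real.exp (C * t) * (⟪ψ, A ψ⟫_ℂ).re :=
        mul_le_mul_of_nonneg_left h0 (Real.exp_pos (C * t)).le
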